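/- Let X = {x₁, …, x_l} and Y = {−y₁, …, −y_m} be disjoint nonempty sets of odd integers, where x₁ > ⋯ > x_l are positive odd integers and y₁ < ⋯ < y_m are positive odd integers. Let L = x₁ + ⋯ + x_l, M = y₁ + ⋯ + y_m and n = lM + mL. Then there exists a tournament of order n whose imbalance set is X ∪ Y. -/

import Mathlib

/-- A tournament on `Fin n`: loopless, and between any two distinct vertices
there is exactly one arc. -/
def IsTournament {n : ℕ} (r : Fin n → Fin n → Bool) : Prop :=
  (∀ i, r i i = false) ∧ ∀ i j : Fin n, i ≠ j → (r i j = !(r j i))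

/-- The score (outdegree) of vertex `i`. -/
def outdeg {n : ℕ} (r : Fin n → Fin n → Bool) (i : Fin n) : ℕ :=
  (Finset.univ.filter fun j => r i j = true).card

/-- The indegree of vertex `i`. -/
def indeg {n : ℕ} (r : Fin n → Fin n → Bool) (i : Fin n) : ℕ :=
  (Finset.univ.filter fun j => r j i = true).card

/-- The imbalance of vertex `i`: outdegree minus indegree. -/
def imbalance {n : ℕ} (r : Fin n → Fin n → Bool) (i : Fin n) : ℤ :=
  (outdeg r i : ℤ) - (indeg r i : ℤ)

/-- The imbalance set of a digraph. -/
def imbalanceSet {n : ℕ} (r : Fin n → Fin n → Bool) : Finset ℤ :=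
  Finset.image (imbalance r) Finset.univ

def reg (t : ℕ) : Fin (2*t+1) → Fin (2*t+1) → Bool :=
  fun u v => decide (0 < (v - u).val ∧ (v - u).val ≤ t)

lemma val_neg' (t : ℕ) (w : Fin (2*t+1)) (hw : w.val ≠ 0) : (-w).val = 2*t+1 - w.val := by
  rw [Fin.coe_neg]
  exact Nat.mod_eq_of_lt (by omega)

lemma reg_tournament (t : ℕ) : IsTournament (reg t) := by
  constructor
  · intro i; simp [reg]
  · intro i j hij
    have hne : (j - i).val ≠ 0 := by
      intro h
      exact hij (sub_eq_zero.mp (Fin.ext h)).symm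
    have hneg : i - j = -(j - i) := by rw [neg_sub]
    have hval : (i - j).val = 2*t+1 - (j - i).val := by
      rw [hneg, val_neg' t _ hne]
    have hlt : (j - i).val < 2*t+1 := (j - i).isLt
    simp only [reg]
    rw [hval]
    simp only [← decide_not]
    exact decide_eq_decide.mpr (by omega)

lemma card_sub_shift (t : ℕ) (u : Fin (2*t+1)) (P : Fin (2*t+1) → Prop) [DecidablePred P] :
    ((Finset.univ : Finset (Fin (2*t+1))).filter (fun v => P (v - u))).card
      = (Finset.univ.filter P).card := by
  apply Finset.card_bij (fun v _ => v - u)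
  · intro v hv; simp only [Finset.mem_filter, Finset.mem_univ, true_and] at hv ⊢; exact hv
  · intro v _ w _ h; exact sub_left_injective h
  · intro w hw
    simp only [Finset.mem_filter, Finset.mem_univ, true_and] at hw
    exact ⟨w + u, by simpa using hw, by simp⟩

lemma card_sub_shift' (t : ℕ) (u : Fin (2*t+1)) (P : Fin (2*t+1) → Prop) [DecidablePred P] :
    ((Finset.univ : Finset (Fin (2*t+1))).filter (fun v => P (u - v))).card
      = (Finset.univ.filter P).card := by
  apply Finset.card_bij (fun v _ => u - v)
  · intro v hv; simp only [Finset.mem_filter, Finset.mem_univ, true_and] at hv ⊢; exact hv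
  · intro v _ w _ h; exact sub_right_injective h
  · intro w hw
    simp only [Finset.mem_filter, Finset.mem_univ, true_and] at hw
    exact ⟨u - w, by simpa using hw, by simp⟩

lemma card_fin_filter (b : ℕ) (P : ℕ → Prop) [DecidablePred P] :
    ((Finset.univ : Finset (Fin b)).filter (fun j => P j.val)).card
      = ((Finset.range b).filter P).card := by
  apply Finset.card_bij (fun j _ => j.val)
  · intro j hj
    simp only [Finset.mem_filter, Finset.mem_range, Finset.mem_univ, true_and] at hj ⊢
    exact ⟨j.isLt, hj⟩
  · intro j _ k _ h; exact Fin.ext h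
  · intro k hk
    simp only [Finset.mem_filter, Finset.mem_range] at hk
    exact ⟨⟨k, hk.1⟩, by simp [hk.2], rfl⟩

lemma reg_outdeg (t : ℕ) (u : Fin (2*t+1)) : outdeg (reg t) u = t := by
  unfold outdeg reg
  simp only [decide_eq_true_eq]
  rw [card_sub_shift t u (fun w => 0 < w.val ∧ w.val ≤ t)]
  rw [card_fin_filter (2*t+1) (fun w => 0 < w ∧ w ≤ t)]
  have : (Finset.range (2*t+1)).filter (fun w => 0 < w ∧ w ≤ t) = Finset.Icc 1 t := by
    ext k; simp [Finset.mem_Icc]; omega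
  rw [this, Nat.card_Icc]
  omega

lemma reg_indeg (t : ℕ) (u : Fin (2*t+1)) : indeg (reg t) u = t := by
  unfold indeg reg
  simp only [decide_eq_true_eq]
  rw [card_sub_shift' t u (fun w => 0 < w.val ∧ w.val ≤ t)]
  rw [card_fin_filter (2*t+1) (fun w => 0 < w ∧ w ≤ t)]
  have : (Finset.range (2*t+1)).filter (fun w => 0 < w ∧ w ≤ t) = Finset.Icc 1 t := by
    ext k; simp [Finset.mem_Icc]; omega
  rw [this, Nat.card_Icc]
  omega

lemma reg_imbalance (t : ℕ) (u : Fin (2*t+1)) : imbalance (reg t) u = 0 := by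
  simp [imbalance, reg_outdeg, reg_indeg]

variable {a b : ℕ}

def glue (r₁ : Fin a → Fin a → Bool) (r₂ : Fin b → Fin b → Bool)
    (c : Fin a → Fin b → Bool) : Fin (a+b) → Fin (a+b) → Bool :=
  fun u v =>
    if hu : (u:ℕ) < a then
      if hv : (v:ℕ) < a then r₁ ⟨u, hu⟩ ⟨v, hv⟩
      else c ⟨u, hu⟩ ⟨(v:ℕ) - a, by omega⟩
    else
      if hv : (v:ℕ) < a then !(c ⟨v, hv⟩ ⟨(u:ℕ) - a, by omega⟩)
      else r₂ ⟨(u:ℕ) - a, by omega⟩ ⟨(v:ℕ) - a, by omega⟩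

lemma glue_ll (r₁ : Fin a → Fin a → Bool) (r₂ : Fin b → Fin b → Bool)
    (c : Fin a → Fin b → Bool) (i j : Fin a) :
    glue r₁ r₂ c (Fin.castAdd b i) (Fin.castAdd b j) = r₁ i j := by
  simp [glue, Fin.castAdd, Fin.castLE, i.isLt, j.isLt]

lemma glue_lr (r₁ : Fin a → Fin a → Bool) (r₂ : Fin b → Fin b → Bool)
    (c : Fin a → Fin b → Bool) (i : Fin a) (j : Fin b) :
    glue r₁ r₂ c (Fin.castAdd b i) (Fin.natAdd a j) = c i j := by
  have h1 : ¬ ((Fin.natAdd a j : Fin (a+b)) : ℕ) < a := by simp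
  simp [glue, Fin.castAdd, Fin.castLE, Fin.natAdd, i.isLt, h1]

lemma glue_rl (r₁ : Fin a → Fin a → Bool) (r₂ : Fin b → Fin b → Bool)
    (c : Fin a → Fin b → Bool) (i : Fin b) (j : Fin a) :
    glue r₁ r₂ c (Fin.natAdd a i) (Fin.castAdd b j) = !(c j i) := by
  have h1 : ¬ ((Fin.natAdd a i : Fin (a+b)) : ℕ) < a := by simp
  simp [glue, Fin.castAdd, Fin.castLE, Fin.natAdd, j.isLt, h1]

lemma glue_rr (r₁ : Fin a → Fin a → Bool) (r₂ : Fin b → Fin b → Bool)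
    (c : Fin a → Fin b → Bool) (i j : Fin b) :
    glue r₁ r₂ c (Fin.natAdd a i) (Fin.natAdd a j) = r₂ i j := by
  have h1 : ¬ ((Fin.natAdd a i : Fin (a+b)) : ℕ) < a := by simp
  have h2 : ¬ ((Fin.natAdd a j : Fin (a+b)) : ℕ) < a := by simp
  simp [glue, Fin.natAdd, h1, h2]

lemma glue_tournament {r₁ : Fin a → Fin a → Bool} {r₂ : Fin b → Fin b → Bool}
    (c : Fin a → Fin b → Bool) (h₁ : IsTournament r₁) (h₂ : IsTournament r₂) :
    IsTournament (glue r₁ r₂ c) := by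
  constructor
  · intro i
    by_cases hi : (i:ℕ) < a
    · simpa [glue, hi] using h₁.1 ⟨i, hi⟩
    · simpa [glue, hi] using h₂.1 ⟨(i:ℕ) - a, by omega⟩
  · intro i j hij
    by_cases hi : (i:ℕ) < a <;> by_cases hj : (j:ℕ) < a
    · have hne : (⟨(i:ℕ), hi⟩ : Fin a) ≠ ⟨(j:ℕ), hj⟩ := by
        intro h; exact hij (Fin.ext (Fin.mk_eq_mk.mp h))
      simpa [glue, hi, hj] using h₁.2 _ _ hne
    · simp [glue, hi, hj]
    · simp [glue, hi, hj]
    · have hne : (⟨(i:ℕ) - a, by omega⟩ : Fin b) ≠ ⟨(j:ℕ) - a, by omega⟩ := by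
        intro h
        have := Fin.mk_eq_mk.mp h
        exact hij (Fin.ext (by omega))
      simpa [glue, hi, hj] using h₂.2 _ _ hne

def crossOut (c : Fin a → Fin b → Bool) (i : Fin a) : ℕ :=
  (Finset.univ.filter fun j => c i j = true).card
def crossIn (c : Fin a → Fin b → Bool) (j : Fin b) : ℕ :=
  (Finset.univ.filter fun i => c i j = true).card

lemma outdeg_glue_left (r₁ : Fin a → Fin a → Bool) (r₂ : Fin b → Fin b → Bool)
    (c : Fin a → Fin b → Bool) (i : Fin a) :
    outdeg (glue r₁ r₂ c) (Fin.castAdd b i) = outdeg r₁ i + crossOut c i := by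
  unfold outdeg crossOut
  rw [Finset.card_filter, Finset.card_filter, Finset.card_filter, Fin.sum_univ_add]
  congr 1
  · exact Finset.sum_congr rfl fun j _ => by rw [glue_ll]
  · exact Finset.sum_congr rfl fun j _ => by rw [glue_lr]

lemma indeg_glue_left (r₁ : Fin a → Fin a → Bool) (r₂ : Fin b → Fin b → Bool)
    (c : Fin a → Fin b → Bool) (i : Fin a) :
    indeg (glue r₁ r₂ c) (Fin.castAdd b i) = indeg r₁ i + (b - crossOut c i) := by
  unfold indeg
  rw [Finset.card_filter, Fin.sum_univ_add]
  have h2 : ∑ j : Fin b, (if glue r₁ r₂ c (Fin.natAdd a j) (Fin.castAdd b i) = true then 1 else 0)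
      = b - crossOut c i := by
    have : ∀ j : Fin b, glue r₁ r₂ c (Fin.natAdd a j) (Fin.castAdd b i) = !(c i j) := fun j => glue_rl ..
    simp only [this]
    rw [← Finset.card_filter]
    have hsplit := Finset.card_filter_add_card_filter_not
      (s := (Finset.univ : Finset (Fin b))) (p := fun j => c i j = true)
    have : (Finset.univ.filter fun j : Fin b => (!(c i j)) = true).card
        = (Finset.univ.filter fun j : Fin b => ¬ (c i j = true)).card := by
      congr 1; ext j; simp
    rw [this]
    unfold crossOut
    simp only [Finset.card_univ, Fintype.card_fin] at hsplit
    omega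
  rw [h2]
  congr 1
  rw [Finset.card_filter]
  exact Finset.sum_congr rfl fun j _ => by rw [glue_ll]

lemma outdeg_glue_right (r₁ : Fin a → Fin a → Bool) (r₂ : Fin b → Fin b → Bool)
    (c : Fin a → Fin b → Bool) (v : Fin b) :
    outdeg (glue r₁ r₂ c) (Fin.natAdd a v) = outdeg r₂ v + (a - crossIn c v) := by
  unfold outdeg
  rw [Finset.card_filter, Fin.sum_univ_add]
  have h1 : ∑ j : Fin a, (if glue r₁ r₂ c (Fin.natAdd a v) (Fin.castAdd b j) = true then 1 else 0)
      = a - crossIn c v := by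
    have : ∀ j : Fin a, glue r₁ r₂ c (Fin.natAdd a v) (Fin.castAdd b j) = !(c j v) := fun j => glue_rl ..
    simp only [this]
    rw [← Finset.card_filter]
    have hsplit := Finset.card_filter_add_card_filter_not
      (s := (Finset.univ : Finset (Fin a))) (p := fun j => c j v = true)
    have : (Finset.univ.filter fun j : Fin a => (!(c j v)) = true).card
        = (Finset.univ.filter fun j : Fin a => ¬ (c j v = true)).card := by
      congr 1; ext j; simp
    rw [this]
    unfold crossIn
    simp only [Finset.card_univ, Fintype.card_fin] at hsplit
    omega
  rw [h1]
  rw [add_comm]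
  congr 1
  rw [Finset.card_filter]
  exact Finset.sum_congr rfl fun j _ => by rw [glue_rr]

lemma indeg_glue_right (r₁ : Fin a → Fin a → Bool) (r₂ : Fin b → Fin b → Bool)
    (c : Fin a → Fin b → Bool) (v : Fin b) :
    indeg (glue r₁ r₂ c) (Fin.natAdd a v) = indeg r₂ v + crossIn c v := by
  unfold indeg crossIn
  rw [Finset.card_filter, Finset.card_filter, Finset.card_filter, Fin.sum_univ_add]
  rw [add_comm]
  congr 1
  · exact Finset.sum_congr rfl fun j _ => by rw [glue_rr]
  · exact Finset.sum_congr rfl fun j _ => by rw [glue_lr]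

lemma imbalance_glue_left (r₁ : Fin a → Fin a → Bool) (r₂ : Fin b → Fin b → Bool)
    (c : Fin a → Fin b → Bool) (i : Fin a) :
    imbalance (glue r₁ r₂ c) (Fin.castAdd b i)
      = imbalance r₁ i + 2 * (crossOut c i : ℤ) - b := by
  have hle : crossOut c i ≤ b := by
    unfold crossOut
    calc (Finset.univ.filter fun j : Fin b => c i j = true).card
        ≤ (Finset.univ : Finset (Fin b)).card := Finset.card_filter_le _ _
      _ = b := by simp
  unfold imbalance
  rw [outdeg_glue_left, indeg_glue_left]
  push_cast [hle]
  ring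

lemma imbalance_glue_right (r₁ : Fin a → Fin a → Bool) (r₂ : Fin b → Fin b → Bool)
    (c : Fin a → Fin b → Bool) (v : Fin b) :
    imbalance (glue r₁ r₂ c) (Fin.natAdd a v)
      = imbalance r₂ v + a - 2 * (crossIn c v : ℤ) := by
  have hle : crossIn c v ≤ a := by
    unfold crossIn
    calc (Finset.univ.filter fun j : Fin a => c j v = true).card
        ≤ (Finset.univ : Finset (Fin a)).card := Finset.card_filter_le _ _
      _ = a := by simp
  unfold imbalance
  rw [outdeg_glue_right, indeg_glue_right]
  push_cast [hle]
  ring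

lemma imbalanceSet_glue (r₁ : Fin a → Fin a → Bool) (r₂ : Fin b → Fin b → Bool)
    (c : Fin a → Fin b → Bool)
    (hl : ∀ i, imbalance (glue r₁ r₂ c) (Fin.castAdd b i) = imbalance r₁ i)
    (hr : ∀ v, imbalance (glue r₁ r₂ c) (Fin.natAdd a v) = imbalance r₂ v) :
    imbalanceSet (glue r₁ r₂ c) = imbalanceSet r₁ ∪ imbalanceSet r₂ := by
  ext z
  simp only [imbalanceSet, Finset.mem_union, Finset.mem_image, Finset.mem_univ, true_and]
  constructor
  · rintro ⟨u, rfl⟩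
    by_cases hu : (u:ℕ) < a
    · left
      refine ⟨⟨u, hu⟩, ?_⟩
      rw [← hl ⟨u, hu⟩]
      congr 1
    · right
      refine ⟨⟨(u:ℕ) - a, by omega⟩, ?_⟩
      rw [← hr ⟨(u:ℕ) - a, by omega⟩]
      congr 1
      exact Fin.ext (by simp only [Fin.natAdd]; omega)
  · rintro (⟨i, rfl⟩ | ⟨v, rfl⟩)
    · exact ⟨Fin.castAdd b i, hl i⟩
    · exact ⟨Fin.natAdd a v, hr v⟩

def parCross : Fin a → Fin b → Bool := fun i j => decide ((i.val + j.val) % 2 = 0)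

lemma card_fin_filter' (b : ℕ) (P : ℕ → Prop) [DecidablePred P] :
    ((Finset.univ : Finset (Fin b)).filter (fun j => P j.val)).card
      = ((Finset.range b).filter P).card := by
  apply Finset.card_bij (fun j _ => j.val)
  · intro j hj
    simp only [Finset.mem_filter, Finset.mem_range, Finset.mem_univ, true_and] at hj ⊢
    exact ⟨j.isLt, hj⟩
  · intro j _ k _ h; exact Fin.ext h
  · intro k hk
    simp only [Finset.mem_filter, Finset.mem_range] at hk
    exact ⟨⟨k, hk.1⟩, by simp [hk.2], rfl⟩

lemma card_range_mod_two' (m p : ℕ) (hp : p < 2) :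
    ((Finset.range (2*m)).filter (fun j => j % 2 = p)).card = m := by
  induction m with
  | zero => simp
  | succ m ih =>
    have : Finset.range (2*(m+1)) = insert (2*m+1) (insert (2*m) (Finset.range (2*m))) := by
      ext k; simp; omega
    rw [this, Finset.filter_insert, Finset.filter_insert]
    interval_cases p
    · have h1 : ¬ ((2*m+1) % 2 = 0) := by omega
      have h2 : (2*m) % 2 = 0 := by omega
      rw [if_neg h1, if_pos h2, Finset.card_insert_of_notMem (by simp), ih]
    · have h1 : ((2*m+1) % 2 = 1) := by omega
      have h2 : ¬ ((2*m) % 2 = 1) := by omega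
      rw [if_pos h1, if_neg h2, Finset.card_insert_of_notMem (by simp), ih]

lemma card_fin_mod_two (b : ℕ) (hb : Even b) (p : ℕ) (hp : p < 2) :
    ((Finset.univ : Finset (Fin b)).filter (fun j => j.val % 2 = p)).card = b / 2 := by
  obtain ⟨m, rfl⟩ := hb
  rw [show m + m = 2*m by ring] at *
  rw [card_fin_filter' (2*m) (fun j => j % 2 = p), card_range_mod_two' m p hp]
  omega

lemma crossOut_parCross (hb : Even b) (i : Fin a) :
    crossOut (parCross : Fin a → Fin b → Bool) i = b / 2 := by
  unfold crossOut parCross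
  have heq : ((Finset.univ : Finset (Fin b)).filter fun j => decide ((i.val + j.val) % 2 = 0) = true)
      = ((Finset.univ : Finset (Fin b)).filter fun j => j.val % 2 = i.val % 2) := by
    ext j
    simp only [Finset.mem_filter, Finset.mem_univ, true_and, decide_eq_true_eq]
    omega
  rw [heq, card_fin_mod_two b hb (i.val % 2) (Nat.mod_lt _ (by omega))]

lemma crossIn_parCross (ha : Even a) (j : Fin b) :
    crossIn (parCross : Fin a → Fin b → Bool) j = a / 2 := by
  unfold crossIn parCross
  have heq : ((Finset.univ : Finset (Fin a)).filter fun i => decide ((i.val + j.val) % 2 = 0) = true)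
      = ((Finset.univ : Finset (Fin a)).filter fun i => i.val % 2 = j.val % 2) := by
    ext i
    simp only [Finset.mem_filter, Finset.mem_univ, true_and, decide_eq_true_eq]
    omega
  rw [heq, card_fin_mod_two a ha (j.val % 2) (Nat.mod_lt _ (by omega))]

lemma fin_addCases (u : Fin (a+b)) :
    (∃ i, u = Fin.castAdd b i) ∨ (∃ v, u = Fin.natAdd a v) := by
  by_cases hu : (u:ℕ) < a
  · exact Or.inl ⟨⟨u, hu⟩, Fin.ext rfl⟩
  · exact Or.inr ⟨⟨(u:ℕ) - a, by omega⟩, Fin.ext (by simp only [Fin.natAdd]; omega)⟩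

lemma crossOut_true (i : Fin a) :
    crossOut (fun (_ : Fin a) (_ : Fin b) => true) i = b := by
  unfold crossOut; simp

lemma crossIn_true (j : Fin b) :
    crossIn (fun (_ : Fin a) (_ : Fin b) => true) j = a := by
  unfold crossIn; simp

lemma evenGlue {r₁ : Fin a → Fin a → Bool} {r₂ : Fin b → Fin b → Bool}
    (ha : Even a) (hb : Even b) (h₁ : IsTournament r₁) (h₂ : IsTournament r₂) :
    ∃ r : Fin (a + b) → Fin (a + b) → Bool, IsTournament r ∧
      imbalanceSet r = imbalanceSet r₁ ∪ imbalanceSet r₂ := by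
  refine ⟨glue r₁ r₂ parCross, glue_tournament _ h₁ h₂, imbalanceSet_glue _ _ _ ?_ ?_⟩
  · intro i
    rw [imbalance_glue_left, crossOut_parCross hb]
    obtain ⟨m, rfl⟩ := hb
    push_cast
    ring_nf
    omega
  · intro v
    rw [imbalance_glue_right, crossIn_parCross ha]
    obtain ⟨m, rfl⟩ := ha
    push_cast
    ring_nf
    omega

lemma gadget (s t : ℕ) :
    ∃ r : Fin ((2*s+1) + (2*t+1)) → Fin ((2*s+1) + (2*t+1)) → Bool, IsTournament r ∧
      imbalanceSet r = {((2*t+1 : ℕ) : ℤ), -((2*s+1 : ℕ) : ℤ)} := by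
  set a := 2*s+1
  set b := 2*t+1
  refine ⟨glue (reg s) (reg t) (fun _ _ => true),
    glue_tournament _ (reg_tournament s) (reg_tournament t), ?_⟩
  have hl : ∀ i, imbalance (glue (reg s) (reg t) (fun _ _ => true)) (Fin.castAdd b i)
      = (b : ℤ) := by
    intro i
    rw [imbalance_glue_left, crossOut_true, reg_imbalance]
    ring
  have hr : ∀ v, imbalance (glue (reg s) (reg t) (fun _ _ => true)) (Fin.natAdd a v)
      = -(a : ℤ) := by
    intro v
    rw [imbalance_glue_right, crossIn_true, reg_imbalance]
    ring
  ext z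
  simp only [imbalanceSet, Finset.mem_image, Finset.mem_univ, true_and,
    Finset.mem_insert, Finset.mem_singleton]
  constructor
  · rintro ⟨u, rfl⟩
    rcases fin_addCases u with ⟨i, rfl⟩ | ⟨v, rfl⟩
    · exact Or.inl (hl i)
    · exact Or.inr (hr v)
  · rintro (rfl | rfl)
    · exact ⟨Fin.castAdd b ⟨0, by omega⟩, hl _⟩
    · exact ⟨Fin.natAdd a ⟨0, by omega⟩, hr _⟩

lemma fold : ∀ (P : Finset (ℤ × ℤ)) (n : ℕ),
    (∀ p ∈ P, 0 < p.1 ∧ Odd p.1 ∧ p.2 < 0 ∧ Odd p.2) →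
    ((n : ℤ) = ∑ p ∈ P, (p.1 - p.2)) →
    Even n ∧ ∃ r : Fin n → Fin n → Bool, IsTournament r ∧
      imbalanceSet r = P.image Prod.fst ∪ P.image Prod.snd := by
  intro P
  induction P using Finset.induction_on with
  | empty =>
    intro n _ hn
    simp only [Finset.sum_empty, Nat.cast_eq_zero] at hn
    subst hn
    refine ⟨Even.zero, fun _ _ => false, ⟨fun i => rfl, fun i j _ => i.elim0⟩, ?_⟩
    simp [imbalanceSet]
  | @insert p Q hp ih =>
    intro n h hn
    obtain ⟨hx1, hx2, hy1, hy2⟩ := h p (Finset.mem_insert_self p Q)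
    -- x = p.1 = 2t+1, -p.2 = 2s+1
    obtain ⟨t', ht'⟩ := hx2
    obtain ⟨s', hs'⟩ := hy2
    set t := t'.toNat with htdef
    set s := (-s' - 1).toNat with hsdef
    have hxt : ((2*t+1 : ℕ) : ℤ) = p.1 := by push_cast; omega
    have hys : ((2*s+1 : ℕ) : ℤ) = -p.2 := by push_cast; omega
    set a := (2*s+1) + (2*t+1) with hadef
    have haz : (a : ℤ) = p.1 - p.2 := by push_cast at hxt hys ⊢; omega
    have hS : (0:ℤ) ≤ ∑ q ∈ Q, (q.1 - q.2) := by
      apply Finset.sum_nonneg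
      intro q hq
      have := h q (Finset.mem_insert_of_mem hq)
      omega
    set n' := (∑ q ∈ Q, (q.1 - q.2)).toNat with hn'def
    have hn'z : (n' : ℤ) = ∑ q ∈ Q, (q.1 - q.2) := Int.toNat_of_nonneg hS
    have hsum : n = a + n' := by
      have : (n:ℤ) = ((a + n' : ℕ) : ℤ) := by
        rw [hn, Finset.sum_insert hp]
        push_cast
        omega
      exact_mod_cast this
    subst hsum
    obtain ⟨hev, r₂, hr₂t, hr₂s⟩ := ih n' (fun q hq => h q (Finset.mem_insert_of_mem hq)) hn'z
    obtain ⟨r₁, hr₁t, hr₁s⟩ := gadget s t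
    obtain ⟨r, hrt, hrs⟩ := evenGlue (a := a) (b := n') ⟨s+t+1, by omega⟩ hev hr₁t hr₂t
    refine ⟨⟨(s+t+1) + n'/2, by obtain ⟨m, hm⟩ := hev; omega⟩, r, hrt, ?_⟩
    rw [hrs, hr₁s, hr₂s, hxt]
    have : -((2*s+1 : ℕ) : ℤ) = p.2 := by omega
    rw [this, Finset.image_insert, Finset.image_insert]
    ext z
    simp only [Finset.mem_union, Finset.mem_insert, Finset.mem_singleton]
    tauto

/-- Any disjoint nonempty sets `X` of positive odd integers and `Y` of
negative odd integers form the imbalance set of a tournament of order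
`n = l*M + m*L`. -/
theorem odd_imbalanceSet_realizable (X Y : Finset ℤ)
    (hXne : X.Nonempty) (hYne : Y.Nonempty) (hdisj : Disjoint X Y)
    (hX : ∀ x ∈ X, 0 < x ∧ Odd x) (hY : ∀ y ∈ Y, y < 0 ∧ Odd y)
    (L M : ℤ) (hL : L = ∑ x ∈ X, x) (hM : M = ∑ y ∈ Y, -y)
    (n : ℕ) (hn : (n : ℤ) = X.card * M + Y.card * L) :
    ∃ r : Fin n → Fin n → Bool, IsTournament r ∧ imbalanceSet r = X ∪ Y := by
  have h1 : ∀ p ∈ X ×ˢ Y, 0 < p.1 ∧ Odd p.1 ∧ p.2 < 0 ∧ Odd p.2 := by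
    intro p hp
    rw [Finset.mem_product] at hp
    obtain ⟨h1, h2⟩ := hX p.1 hp.1
    obtain ⟨h3, h4⟩ := hY p.2 hp.2
    exact ⟨h1, h2, h3, h4⟩
  have h2 : (n : ℤ) = ∑ p ∈ X ×ˢ Y, (p.1 - p.2) := by
    rw [Finset.sum_product]
    have : ∀ x ∈ X, ∑ y ∈ Y, (x - y) = Y.card * x + M := by
      intro x _
      rw [Finset.sum_sub_distrib, hM]
      simp [Finset.sum_const, Finset.sum_neg_distrib]
      ring_nf
      rw [Finset.sum_neg_distrib]
      ring
    rw [Finset.sum_congr rfl this, Finset.sum_add_distrib]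
    simp only [Finset.sum_const, nsmul_eq_mul]
    rw [← Finset.mul_sum, ← hL, hn]
    ring
  obtain ⟨-, r, hrt, hrs⟩ := fold (X ×ˢ Y) n h1 h2
  refine ⟨r, hrt, ?_⟩
  rw [hrs]
  congr 1
  · ext z
    simp only [Finset.mem_image, Finset.mem_product]
    constructor
    · rintro ⟨p, ⟨hpx, _⟩, rfl⟩; exact hpx
    · intro hz
      obtain ⟨y, hy⟩ := hYne
      exact ⟨(z, y), ⟨hz, hy⟩, rfl⟩
  · ext z
    simp only [Finset.mem_image, Finset.mem_product]
    constructor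
    · rintro ⟨p, ⟨_, hpy⟩, rfl⟩; exact hpy
    · intro hz
      obtain ⟨x, hx⟩ := hXne
      exact ⟨(x, z), ⟨hx, hz⟩, rfl⟩
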